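/- Let d ≥ 1, let P⁻ and P⁺ be finite families of points in ℝ^d, and let q⁻, q⁺ ∈ ℝ^d be two distinct points with Tukey depths t(q⁻; P⁻) and t(q⁺; P⁺) respectively. Set w = q⁺ − q⁻ and replace every point of P⁻ and P⁺ by its projection along w. Then every linear classifier on the projected families makes at least min(t(q⁻; P⁻), t(q⁺; P⁺)) misclassifications; that is, for every nonzero v ∈ ℝ^d and every c ∈ ℝ, the number of indices i with ⟪π_w(P⁻ i), v⟫ ≥ c plus the number of indices j with ⟪π_w(P⁺ j), v⟫ < c is at least min(t(q⁻; P⁻), t(q⁺; P⁺)). -/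

import Mathlib

open scoped InnerProductSpace
open scoped Classical

/-- Projection of a point `p` along the vector `w`: the orthogonal projection of `p`
onto the hyperplane through the origin orthogonal to `w`. -/
noncomputable def proj {d : ℕ} (w p : EuclideanSpace ℝ (Fin d)) : EuclideanSpace ℝ (Fin d) :=
  p - (⟪p, w⟫_ℝ / ‖w‖ ^ 2) • w

/-- Tukey depth of `q` with respect to the finite family `P`: the minimum, over nonzero
vectors `v`, of the number of indices `i` with `⟪P i - q, v⟫ ≥ 0`. -/
noncomputable def tukeyDepth {d m : ℕ} (q : EuclideanSpace ℝ (Fin d))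
    (P : Fin m → EuclideanSpace ℝ (Fin d)) : ℕ :=
  sInf {k : ℕ | ∃ v : EuclideanSpace ℝ (Fin d), v ≠ 0 ∧
    k = (Finset.univ.filter fun i => 0 ≤ ⟪P i - q, v⟫_ℝ).card}
lemma proj_inner {d : ℕ} (w p v : EuclideanSpace ℝ (Fin d)) :
    ⟪proj w p, v⟫_ℝ = ⟪p, proj w v⟫_ℝ := by
  simp only [proj, inner_sub_left, inner_sub_right, real_inner_smul_left, real_inner_smul_right]
  rw [real_inner_comm w v]
  ring

lemma inner_w_proj {d : ℕ} (w v : EuclideanSpace ℝ (Fin d)) (hw : w ≠ 0) :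
    ⟪w, proj w v⟫_ℝ = 0 := by
  have hn : ‖w‖ ≠ 0 := norm_ne_zero_iff.mpr hw
  simp only [proj, inner_sub_right, real_inner_smul_right, real_inner_self_eq_norm_sq]
  rw [real_inner_comm w v]
  field_simp
  ring

lemma tukeyDepth_le {d m : ℕ} (q : EuclideanSpace ℝ (Fin d))
    (P : Fin m → EuclideanSpace ℝ (Fin d)) (v : EuclideanSpace ℝ (Fin d)) (hv : v ≠ 0) :
    tukeyDepth q P ≤ (Finset.univ.filter fun i => 0 ≤ ⟪P i - q, v⟫_ℝ).card :=
  Nat.sInf_le ⟨v, hv, rfl⟩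

theorem tukey_projection_misclassifications {d m₁ m₂ : ℕ} (hd : 1 ≤ d)
    (Pm : Fin m₁ → EuclideanSpace ℝ (Fin d)) (Pp : Fin m₂ → EuclideanSpace ℝ (Fin d))
    (qm qp : EuclideanSpace ℝ (Fin d)) (hq : qm ≠ qp)
    (v : EuclideanSpace ℝ (Fin d)) (hv : v ≠ 0) (c : ℝ) :
    min (tukeyDepth qm Pm) (tukeyDepth qp Pp) ≤
      (Finset.univ.filter fun i => c ≤ ⟪proj (qp - qm) (Pm i), v⟫_ℝ).card +
      (Finset.univ.filter fun j => ⟪proj (qp - qm) (Pp j), v⟫_ℝ < c).card := by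
  set w : EuclideanSpace ℝ (Fin d) := qp - qm with hwdef
  have hw : w ≠ 0 := sub_ne_zero.mpr hq.symm
  set u : EuclideanSpace ℝ (Fin d) := proj w v with hudef
  have hpi : ∀ p : EuclideanSpace ℝ (Fin d), ⟪proj w p, v⟫_ℝ = ⟪p, u⟫_ℝ :=
    fun p => proj_inner w p v
  by_cases hu : u = 0
  · -- all projected inner products are 0
    by_cases hc : c ≤ 0
    · have h1 : (Finset.univ.filter fun i => c ≤ ⟪proj w (Pm i), v⟫_ℝ) = Finset.univ := by
        apply Finset.filter_true_of_mem
        intro i _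
        rw [hpi, hu, inner_zero_right]
        exact hc
      calc min (tukeyDepth qm Pm) (tukeyDepth qp Pp) ≤ tukeyDepth qm Pm := min_le_left _ _
        _ ≤ (Finset.univ.filter fun i => 0 ≤ ⟪Pm i - qm, w⟫_ℝ).card := tukeyDepth_le _ _ _ hw
        _ ≤ (Finset.univ : Finset (Fin m₁)).card := Finset.card_le_card (Finset.filter_subset _ _)
        _ = (Finset.univ.filter fun i => c ≤ ⟪proj w (Pm i), v⟫_ℝ).card := by rw [h1]
        _ ≤ _ := Nat.le_add_right _ _
    · push_neg at hc
      have h2 : (Finset.univ.filter fun j => ⟪proj w (Pp j), v⟫_ℝ < c) = Finset.univ := by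
        apply Finset.filter_true_of_mem
        intro j _
        rw [hpi, hu, inner_zero_right]
        exact hc
      calc min (tukeyDepth qm Pm) (tukeyDepth qp Pp) ≤ tukeyDepth qp Pp := min_le_right _ _
        _ ≤ (Finset.univ.filter fun j => 0 ≤ ⟪Pp j - qp, w⟫_ℝ).card := tukeyDepth_le _ _ _ hw
        _ ≤ (Finset.univ : Finset (Fin m₂)).card := Finset.card_le_card (Finset.filter_subset _ _)
        _ = (Finset.univ.filter fun j => ⟪proj w (Pp j), v⟫_ℝ < c).card := by rw [h2]
        _ ≤ _ := Nat.le_add_left _ _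
  · have hqq : ⟪qp, u⟫_ℝ = ⟪qm, u⟫_ℝ := by
      have := inner_w_proj w v hw
      rw [← hudef] at this
      have h : ⟪w, u⟫_ℝ = ⟪qp, u⟫_ℝ - ⟪qm, u⟫_ℝ := by
        rw [hwdef]; exact inner_sub_left _ _ _
      linarith
    by_cases hc : c ≤ ⟪qm, u⟫_ℝ
    · calc min (tukeyDepth qm Pm) (tukeyDepth qp Pp) ≤ tukeyDepth qm Pm := min_le_left _ _
        _ ≤ (Finset.univ.filter fun i => 0 ≤ ⟪Pm i - qm, u⟫_ℝ).card := tukeyDepth_le _ _ _ hu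
        _ ≤ (Finset.univ.filter fun i => c ≤ ⟪proj w (Pm i), v⟫_ℝ).card := by
            apply Finset.card_le_card
            intro i hi
            simp only [Finset.mem_filter, Finset.mem_univ, true_and] at hi ⊢
            rw [hpi]
            have h : ⟪Pm i - qm, u⟫_ℝ = ⟪Pm i, u⟫_ℝ - ⟪qm, u⟫_ℝ := inner_sub_left _ _ _
            linarith
        _ ≤ _ := Nat.le_add_right _ _
    · push_neg at hc
      have hnu : (-u : EuclideanSpace ℝ (Fin d)) ≠ 0 := neg_ne_zero.mpr hu
      calc min (tukeyDepth qm Pm) (tukeyDepth qp Pp) ≤ tukeyDepth qp Pp := min_le_right _ _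
        _ ≤ (Finset.univ.filter fun j => 0 ≤ ⟪Pp j - qp, -u⟫_ℝ).card := tukeyDepth_le _ _ _ hnu
        _ ≤ (Finset.univ.filter fun j => ⟪proj w (Pp j), v⟫_ℝ < c).card := by
            apply Finset.card_le_card
            intro j hj
            simp only [Finset.mem_filter, Finset.mem_univ, true_and, inner_neg_right] at hj ⊢
            rw [hpi]
            have h : ⟪Pp j - qp, u⟫_ℝ = ⟪Pp j, u⟫_ℝ - ⟪qp, u⟫_ℝ := inner_sub_left _ _ _
            linarith
        _ ≤ _ := Nat.le_add_left _ _
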